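/- arXiv:2307.00160 — 4 statements merged into one kernel-verified Lean document; each statement's English description precedes it below -/
import Mathlib

section
/- For every formal power series f ∈ ℚ[[t]] with zero constant term, ℒ(ℰ(f)) = f. -/
open PowerSeries

/-- Substitution of `t^m` for `t` in a formal power series: `(substPow m f) = f(t^m)`.
(For `m ≥ 1`, the coefficient of `t^n` in `f(t^m)` is the coefficient of `t^{n/m}` in `f`
when `m ∣ n`, and `0` otherwise.) -/
noncomputable def substPow (m : ℕ) (f : PowerSeries ℚ) : PowerSeries ℚ :=
  PowerSeries.mk fun n => if m ∣ n then PowerSeries.coeff (n / m) f else 0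

/-- The coefficientwise sum `∑_{m=1}^∞ g m` of a family of power series in which the
`m`-th member has order `≥ m`: its `n`-th coefficient is `∑_{m=1}^{n}` of the `n`-th
coefficients (higher terms contribute nothing since `g m` has order `≥ m`). -/
noncomputable def seriesSum (g : ℕ → PowerSeries ℚ) : PowerSeries ℚ :=
  PowerSeries.mk fun n => ∑ m ∈ Finset.Icc 1 n, PowerSeries.coeff n (g m)

/-- Formal exponential `exp(h) = ∑_{k≥0} h^k / k!` of a power series `h` with zero
constant term (so that `h^k` has order `≥ k` and the sum converges coefficientwise). -/
noncomputable def expS (h : PowerSeries ℚ) : PowerSeries ℚ :=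
  PowerSeries.mk fun n =>
    ∑ k ∈ Finset.range (n + 1), (Nat.factorial k : ℚ)⁻¹ * PowerSeries.coeff n (h ^ k)

/-- Formal logarithm `log(1 + h) = ∑_{k≥1} (−1)^{k+1} h^k / k` for a power series `h`
with zero constant term. -/
noncomputable def logS (h : PowerSeries ℚ) : PowerSeries ℚ :=
  PowerSeries.mk fun n =>
    ∑ k ∈ Finset.Icc 1 n, ((-1 : ℚ) ^ (k + 1) / k) * PowerSeries.coeff n (h ^ k)

/-- The operator `ℰ(f) = exp(∑_{m=1}^∞ (1/m)·f(t^m))`. -/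
noncomputable def calE (f : PowerSeries ℚ) : PowerSeries ℚ :=
  expS (seriesSum fun m => (m : ℚ)⁻¹ • substPow m f)

/-- The operator `ℒ(g) = ∑_{n=1}^∞ (μ(n)/n)·log g(t^n)`. -/
noncomputable def calL (g : PowerSeries ℚ) : PowerSeries ℚ :=
  seriesSum fun n =>
    ((ArithmeticFunction.moebius n : ℚ) / n) • logS (substPow n g - 1)

noncomputable def F (c : ℕ → ℚ) (h : PowerSeries ℚ) : PowerSeries ℚ :=
  PowerSeries.mk fun n => ∑ k ∈ Finset.range (n + 1), c k * PowerSeries.coeff n (h ^ k)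

theorem coeff_F (c : ℕ → ℚ) (h : PowerSeries ℚ) (n : ℕ) :
    coeff n (F c h) = ∑ k ∈ Finset.range (n + 1), c k * coeff n (h ^ k) :=
  coeff_mk _ _

theorem coeff_pow_eq_zero {h : PowerSeries ℚ} (hh : constantCoeff h = 0) {n k : ℕ}
    (hnk : n < k) : coeff n (h ^ k) = 0 :=
  X_pow_dvd_iff.mp (pow_dvd_pow_of_dvd (X_dvd_iff.mpr hh) k) n hnk

theorem coeff_F_mul {h : PowerSeries ℚ} (hh : constantCoeff h = 0) (c : ℕ → ℚ)
    (g : PowerSeries ℚ) (n : ℕ) :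
    coeff n (F c h * g) = ∑ k ∈ Finset.range (n + 1), c k * coeff n (h ^ k * g) := by
  rw [coeff_mul]
  have step : ∀ p ∈ Finset.HasAntidiagonal.antidiagonal n,
      coeff p.1 (F c h) * coeff p.2 g
        = ∑ k ∈ Finset.range (n + 1), c k * (coeff p.1 (h ^ k) * coeff p.2 g) := by
    intro p hp
    rw [Finset.HasAntidiagonal.mem_antidiagonal] at hp
    rw [coeff_F, Finset.sum_mul]
    rw [Finset.sum_subset (Finset.range_subset_range.mpr (by omega : p.1 + 1 ≤ n + 1))]
    · exact Finset.sum_congr rfl fun k _ => by ring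
    · intro k _ hk
      rw [Finset.mem_range, not_lt] at hk
      rw [coeff_pow_eq_zero hh (by omega)]; ring
  rw [Finset.sum_congr rfl step, Finset.sum_comm]
  refine Finset.sum_congr rfl fun k _ => ?_
  rw [← Finset.mul_sum, coeff_mul]

theorem derivative_F {h : PowerSeries ℚ} (hh : constantCoeff h = 0) (c : ℕ → ℚ) :
    d⁄dX ℚ (F c h) = F (fun k => (k + 1 : ℚ) * c (k + 1)) h * d⁄dX ℚ h := by
  ext n
  rw [coeff_derivative, coeff_F, Finset.sum_mul, coeff_F_mul hh]
  rw [Finset.sum_range_succ' (fun k => c k * coeff (n + 1) (h ^ k) * (n + 1 : ℚ))]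
  have h0 : c 0 * coeff (n + 1) ((h : PowerSeries ℚ) ^ 0) * (n + 1 : ℚ) = 0 := by
    simp [coeff_one]
  rw [h0, add_zero]
  refine Finset.sum_congr rfl fun k _ => ?_
  have hd : coeff n (d⁄dX ℚ (h ^ (k + 1))) = coeff (n + 1) (h ^ (k + 1)) * (n + 1 : ℚ) :=
    coeff_derivative _ n
  have hl : d⁄dX ℚ (h ^ (k + 1)) = (k + 1 : ℕ) • (h ^ k • d⁄dX ℚ h) := by
    simpa using Derivation.leibniz_pow (d⁄dX ℚ) (a := h) (k + 1)
  rw [hl, map_nsmul, smul_eq_mul, nsmul_eq_mul] at hd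
  push_cast at hd
  linear_combination (-c (k + 1)) * hd

theorem range_succ_eq_insert (n : ℕ) : Finset.range (n + 1) = insert 0 (Finset.Icc 1 n) := by
  ext x
  simp only [Finset.mem_range, Finset.mem_insert, Finset.mem_Icc]
  omega

theorem F_congr {c1 c2 : ℕ → ℚ} (h : PowerSeries ℚ) (hc : ∀ k, c1 k = c2 k) :
    F c1 h = F c2 h := by
  unfold F
  congr 1
  funext n
  exact Finset.sum_congr rfl fun k _ => by rw [hc k]

theorem expS_eq_F (h : PowerSeries ℚ) : expS h = F (fun k => (Nat.factorial k : ℚ)⁻¹) h := rfl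

/-- the coefficient sequence of `log(1+x)` -/
def logC : ℕ → ℚ := fun k => if k = 0 then 0 else (-1 : ℚ) ^ (k + 1) / k

theorem logS_eq_F (h : PowerSeries ℚ) : logS h = F logC h := by
  ext n
  rw [logS, coeff_mk, coeff_F, range_succ_eq_insert, Finset.sum_insert (by simp)]
  have h0 : logC 0 = 0 := rfl
  rw [h0, zero_mul, zero_add]
  refine Finset.sum_congr rfl fun k hk => ?_
  rw [Finset.mem_Icc] at hk
  have hk' : logC k = (-1 : ℚ) ^ (k + 1) / k := by rw [logC, if_neg (by omega)]
  rw [hk']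

theorem constantCoeff_F (c : ℕ → ℚ) (h : PowerSeries ℚ) :
    constantCoeff (F c h) = c 0 := by
  rw [← coeff_zero_eq_constantCoeff_apply, coeff_F]
  simp

theorem F_geom {u : PowerSeries ℚ} (hu : constantCoeff u = 0) :
    F (fun k => (-1 : ℚ) ^ k) u * (1 + u) = 1 := by
  ext n
  rw [coeff_F_mul hu]
  have step : ∀ k ∈ Finset.range (n + 1),
      (-1 : ℚ) ^ k * coeff n (u ^ k * (1 + u))
        = (-1 : ℚ) ^ k * coeff n (u ^ k) - (-1 : ℚ) ^ (k + 1) * coeff n (u ^ (k + 1)) := by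
    intro k _
    rw [mul_add, mul_one, map_add, ← pow_succ]
    ring
  rw [Finset.sum_congr rfl step,
    Finset.sum_range_sub' (fun k => (-1 : ℚ) ^ k * coeff n (u ^ k)),
    coeff_pow_eq_zero hu (Nat.lt_succ_self n)]
  simp [coeff_one]

theorem logS_expS {h : PowerSeries ℚ} (hh : constantCoeff h = 0) :
    logS (expS h - 1) = h := by
  set u := expS h - 1 with hu_def
  have hcu : constantCoeff u = 0 := by
    rw [hu_def, map_sub, constantCoeff_one, expS_eq_F, constantCoeff_F]
    simp
  have h1u : (1 : PowerSeries ℚ) + u = expS h := by rw [hu_def]; ring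
  have hdexp : d⁄dX ℚ (expS h) = expS h * d⁄dX ℚ h := by
    rw [expS_eq_F, derivative_F hh,
      F_congr h (c2 := fun k => (Nat.factorial k : ℚ)⁻¹) fun k => by
        rw [Nat.factorial_succ]
        push_cast
        rw [mul_inv, ← mul_assoc, mul_inv_cancel₀ (by positivity : (k : ℚ) + 1 ≠ 0), one_mul]]
  have hdu : d⁄dX ℚ u = expS h * d⁄dX ℚ h := by
    rw [hu_def, map_sub, Derivation.map_one_eq_zero, sub_zero, hdexp]
  have hdlog : d⁄dX ℚ (logS u) = d⁄dX ℚ h := by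
    rw [logS_eq_F, derivative_F hcu,
      F_congr u (c2 := fun k => (-1 : ℚ) ^ k) (fun k => by
        have : logC (k + 1) = (-1 : ℚ) ^ (k + 2) / (k + 1 : ℕ) := by
          rw [logC, if_neg (Nat.succ_ne_zero k)]
        rw [this]
        push_cast
        rw [pow_succ, pow_succ]
        field_simp),
      hdu, ← h1u]
    rw [show F (fun k => (-1:ℚ)^k) u * ((1 + u) * d⁄dX ℚ h)
        = F (fun k => (-1:ℚ)^k) u * (1 + u) * d⁄dX ℚ h by ring, F_geom hcu, one_mul]
  refine derivative.ext hdlog ?_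
  rw [hh, logS_eq_F, constantCoeff_F, logC, if_pos rfl]

theorem coeff_substPow (m : ℕ) (f : PowerSeries ℚ) (n : ℕ) :
    coeff n (substPow m f) = if m ∣ n then coeff (n / m) f else 0 :=
  coeff_mk _ _

theorem constantCoeff_substPow (m : ℕ) (f : PowerSeries ℚ) :
    constantCoeff (substPow m f) = constantCoeff f := by
  rw [← coeff_zero_eq_constantCoeff_apply, ← coeff_zero_eq_constantCoeff_apply, coeff_substPow,
    if_pos (dvd_zero m), Nat.zero_div]

theorem substPow_one {m : ℕ} (hm : m ≠ 0) : substPow m (1 : PowerSeries ℚ) = 1 := by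
  ext n
  simp only [coeff_substPow, coeff_one]
  by_cases h : m ∣ n
  · obtain ⟨k, rfl⟩ := h
    rw [if_pos (Dvd.intro _ rfl), Nat.mul_div_cancel_left k (Nat.pos_of_ne_zero hm)]
    simp [Nat.mul_eq_zero, hm]
  · rw [if_neg h, if_neg (by rintro rfl; exact h (dvd_zero m))]

theorem substPow_mul {m : ℕ} (hm : m ≠ 0) (a b : PowerSeries ℚ) :
    substPow m (a * b) = substPow m a * substPow m b := by
  ext n
  rw [coeff_substPow, coeff_mul n (substPow m a) (substPow m b)]
  have step : ∀ p ∈ Finset.HasAntidiagonal.antidiagonal n,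
      coeff p.1 (substPow m a) * coeff p.2 (substPow m b)
        = if m ∣ p.1 ∧ m ∣ p.2 then coeff (p.1 / m) a * coeff (p.2 / m) b else 0 := by
    intro p _
    rw [coeff_substPow, coeff_substPow]
    split_ifs with h1 h2 h3 <;> simp_all
  rw [Finset.sum_congr rfl step, Finset.sum_ite, Finset.sum_const_zero, add_zero]
  by_cases hdvd : m ∣ n
  · rw [if_pos hdvd, coeff_mul]
    obtain ⟨K, rfl⟩ := hdvd
    rw [Nat.mul_div_cancel_left K (Nat.pos_of_ne_zero hm)]
    refine Finset.sum_nbij' (fun q : ℕ × ℕ => (m * q.1, m * q.2))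
      (fun p : ℕ × ℕ => (p.1 / m, p.2 / m)) ?_ ?_ ?_ ?_ ?_
    · intro q hq
      simp only [Finset.HasAntidiagonal.mem_antidiagonal] at hq
      simp only [Finset.mem_filter, Finset.HasAntidiagonal.mem_antidiagonal]
      exact ⟨by rw [← Nat.mul_add, hq], Dvd.intro _ rfl, Dvd.intro _ rfl⟩
    · intro p hp
      simp only [Finset.mem_filter, Finset.HasAntidiagonal.mem_antidiagonal] at hp
      obtain ⟨hsum, ⟨x, hx⟩, ⟨y, hy⟩⟩ := hp
      simp only [Finset.HasAntidiagonal.mem_antidiagonal, hx, hy,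
        Nat.mul_div_cancel_left _ (Nat.pos_of_ne_zero hm)]
      refine Nat.eq_of_mul_eq_mul_left (Nat.pos_of_ne_zero hm) ?_
      rw [Nat.mul_add]
      omega
    · intro q _
      simp only [Nat.mul_div_cancel_left _ (Nat.pos_of_ne_zero hm)]
    · intro p hp
      simp only [Finset.mem_filter, Finset.HasAntidiagonal.mem_antidiagonal] at hp
      obtain ⟨hsum, ⟨x, hx⟩, ⟨y, hy⟩⟩ := hp
      simp only [hx, hy, Nat.mul_div_cancel_left _ (Nat.pos_of_ne_zero hm)]
      rw [← hx, ← hy]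
    · intro q _
      simp only [Nat.mul_div_cancel_left _ (Nat.pos_of_ne_zero hm)]
  · rw [if_neg hdvd]
    refine (Finset.sum_eq_zero ?_).symm
    intro p hp
    simp only [Finset.mem_filter, Finset.HasAntidiagonal.mem_antidiagonal] at hp
    exact absurd (hp.1 ▸ Nat.dvd_add hp.2.1 hp.2.2) hdvd

theorem substPow_pow {m : ℕ} (hm : m ≠ 0) (a : PowerSeries ℚ) (k : ℕ) :
    substPow m (a ^ k) = substPow m a ^ k := by
  induction k with
  | zero => simpa using substPow_one hm
  | succ k ih => rw [pow_succ, substPow_mul hm, ih, pow_succ]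

theorem coeff_expS (h : PowerSeries ℚ) (n : ℕ) :
    coeff n (expS h) = ∑ k ∈ Finset.range (n + 1),
      (Nat.factorial k : ℚ)⁻¹ * coeff n (h ^ k) := coeff_mk _ _

theorem substPow_expS {m : ℕ} (hm : m ≠ 0) {h : PowerSeries ℚ}
    (hh : constantCoeff h = 0) : substPow m (expS h) = expS (substPow m h) := by
  ext n
  rw [coeff_substPow, coeff_expS (substPow m h) n]
  have step : ∀ k ∈ Finset.range (n + 1),
      (Nat.factorial k : ℚ)⁻¹ * coeff n (substPow m h ^ k)
        = if m ∣ n then (Nat.factorial k : ℚ)⁻¹ * coeff (n / m) (h ^ k) else 0 := by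
    intro k _
    rw [← substPow_pow hm, coeff_substPow]
    split_ifs <;> simp
  rw [Finset.sum_congr rfl step]
  by_cases hdvd : m ∣ n
  · simp only [if_pos hdvd, coeff_expS h (n / m)]
    refine Finset.sum_subset (Finset.range_subset_range.mpr ?_) ?_
    · exact Nat.succ_le_succ (Nat.div_le_self n m)
    · intro k _ hk
      rw [Finset.mem_range, not_lt] at hk
      have hlt : n / m < k := by
        have : n / m ≤ n := Nat.div_le_self n m
        omega
      rw [coeff_pow_eq_zero hh hlt, mul_zero]
  · simp [if_neg hdvd]

theorem sum_Icc_ite_dvd (N : ℕ) (g : ℕ → ℚ) :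
    (∑ k ∈ Finset.Icc 1 N, if k ∣ N then g k else 0) = ∑ k ∈ N.divisors, g k := by
  rw [Nat.divisors, ← Finset.Ico_add_one_right_eq_Icc, Finset.sum_filter]

noncomputable def mobA : ArithmeticFunction ℚ :=
  ⟨fun n => (ArithmeticFunction.moebius n : ℚ) / n, by simp⟩

noncomputable def invA : ArithmeticFunction ℚ := ⟨fun m => (m : ℚ)⁻¹, by simp⟩

theorem mobA_apply (n : ℕ) : mobA n = (ArithmeticFunction.moebius n : ℚ) / n := rfl

theorem invA_apply (n : ℕ) : invA n = (n : ℚ)⁻¹ := rfl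

theorem moebius_sum_antidiagonal (d : ℕ) :
    (∑ x ∈ d.divisorsAntidiagonal, (ArithmeticFunction.moebius x.1 : ℤ))
      = if d = 1 then 1 else 0 := by
  have h := congrArg (fun F : ArithmeticFunction ℤ => F d)
    ArithmeticFunction.moebius_mul_coe_zeta
  simp only [ArithmeticFunction.mul_apply, ArithmeticFunction.one_apply] at h
  rw [← h]
  refine Finset.sum_congr rfl fun x hx => ?_
  have hx2 : x.2 ≠ 0 := Nat.right_ne_zero_of_mem_divisorsAntidiagonal hx
  rw [ArithmeticFunction.natCoe_apply, ArithmeticFunction.zeta_apply_ne hx2]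
  push_cast
  ring

theorem mobA_mul_invA : mobA * invA = 1 := by
  ext d
  rw [ArithmeticFunction.mul_apply, ArithmeticFunction.one_apply]
  rcases eq_or_ne d 0 with rfl | hd
  · simp
  have step : ∀ x ∈ d.divisorsAntidiagonal,
      mobA x.1 * invA x.2 = (ArithmeticFunction.moebius x.1 : ℚ) / d := by
    intro x hx
    have hx' := (Nat.mem_divisorsAntidiagonal.mp hx).1
    have h1 : x.1 ≠ 0 := Nat.left_ne_zero_of_mem_divisorsAntidiagonal hx
    have h2 : x.2 ≠ 0 := Nat.right_ne_zero_of_mem_divisorsAntidiagonal hx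
    rw [mobA_apply, invA_apply, ← hx']
    push_cast
    field_simp
  rw [Finset.sum_congr rfl step, ← Finset.sum_div]
  have := moebius_sum_antidiagonal d
  have hcast : (∑ x ∈ d.divisorsAntidiagonal, (ArithmeticFunction.moebius x.1 : ℚ))
      = ((if d = 1 then 1 else 0 : ℤ) : ℚ) := by
    rw [← this]
    push_cast
    rfl
  rw [hcast]
  split_ifs with h
  · subst h; norm_num
  · norm_num

theorem coeff_seriesSum (g : ℕ → PowerSeries ℚ) (n : ℕ) :
    coeff n (seriesSum g) = ∑ m ∈ Finset.Icc 1 n, coeff n (g m) := coeff_mk _ _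

/-- For every formal power series `f ∈ ℚ[[t]]` with zero constant term, `ℒ(ℰ(f)) = f`. -/
theorem calL_calE (f : PowerSeries ℚ) (hf : PowerSeries.constantCoeff f = 0) :
    calL (calE f) = f := by
  classical
  set H : PowerSeries ℚ := seriesSum fun m => (m : ℚ)⁻¹ • substPow m f with hH
  have hcH : constantCoeff H = 0 := by
    rw [← coeff_zero_eq_constantCoeff_apply, hH, coeff_seriesSum]
    simp
  have coeff_H : ∀ r : ℕ, coeff r H
      = ∑ m ∈ r.divisors, (m : ℚ)⁻¹ * coeff (r / m) f := by
    intro r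
    rw [hH, coeff_seriesSum]
    have step : ∀ m ∈ Finset.Icc 1 r,
        coeff r ((m : ℚ)⁻¹ • substPow m f)
          = if m ∣ r then (m : ℚ)⁻¹ * coeff (r / m) f else 0 := by
      intro m _
      rw [PowerSeries.coeff_smul, coeff_substPow]
      split_ifs <;> simp
    rw [Finset.sum_congr rfl step, sum_Icc_ite_dvd]
  let A3 : ArithmeticFunction ℚ :=
    ⟨fun r => coeff r f, by simpa [coeff_zero_eq_constantCoeff_apply] using hf⟩
  have hA3 : ∀ r, A3 r = coeff r f := fun r => rfl
  ext N
  rw [calL, coeff_seriesSum]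
  have step1 : ∀ n ∈ Finset.Icc 1 N,
      coeff N (((ArithmeticFunction.moebius n : ℚ) / n) • logS (substPow n (calE f) - 1))
        = if n ∣ N then ((ArithmeticFunction.moebius n : ℚ) / n) * coeff (N / n) H
          else 0 := by
    intro n hn
    have hn0 : n ≠ 0 := by rw [Finset.mem_Icc] at hn; omega
    have hsub : substPow n (calE f) = expS (substPow n H) := by
      rw [calE, ← hH, substPow_expS hn0 hcH]
    have hlog : logS (substPow n (calE f) - 1) = substPow n H := by
      rw [hsub, logS_expS (by rw [constantCoeff_substPow]; exact hcH)]
    rw [hlog, PowerSeries.coeff_smul, smul_eq_mul, coeff_substPow]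
    split_ifs <;> simp
  rw [Finset.sum_congr rfl step1, sum_Icc_ite_dvd]
  have expand : ((mobA * (invA * A3)) N : ℚ)
      = ∑ n ∈ N.divisors, ((ArithmeticFunction.moebius n : ℚ) / n) * coeff (N / n) H := by
    rw [ArithmeticFunction.mul_apply,
      Nat.sum_divisorsAntidiagonal (fun i j => mobA i * (invA * A3) j)]
    refine Finset.sum_congr rfl fun n hn => ?_
    rw [mobA_apply]
    congr 1
    rw [ArithmeticFunction.mul_apply,
      Nat.sum_divisorsAntidiagonal (fun i j => invA i * A3 j), coeff_H]
    refine Finset.sum_congr rfl fun m hm => ?_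
    rw [invA_apply, hA3]
  rw [← expand, ← mul_assoc, mobA_mul_invA, one_mul, hA3]
end

section
/- Let r ≥ 1, 0 ≤ k ≤ r, and s₁, …, s_r be positive integers. In the ring of multivariate formal power series ℚ[[t₁, …, t_r]], set H = ∑_{n=1}^∞ (μ(n)/n)·∑_{m=1}^∞ (1/m)·(∑_{i=1}^k s_i t_i^n − ∑_{j=k+1}^r s_j(−t_j)^n)^m (which converges coefficientwise, and equals −∑_{n=1}^∞ (μ(n)/n)·log(1 − ∑_{i=1}^k s_i t_i^n + ∑_{j=k+1}^r s_j(−t_j)^n)). Then for every nonzero multi-index α = (α₁, …, α_r) ∈ ℕ₀^r, the coefficient of t₁^{α₁}⋯t_r^{α_r} in H equals ((−1)^{|α|_−}/|α|)·∑_{n ∣ α} μ(n)·((|α|/n)!·(−1)^{|α|_−/n} / ((α₁/n)!⋯(α_r/n)!))·s₁^{α₁/n}⋯s_r^{α_r/n}, where |α| = α₁ + ⋯ + α_r, |α|_− = α_{k+1} + ⋯ + α_r, and n ∣ α means n divides every component α_i. -/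
open Finset MvPowerSeries

/-- The series `P_n = ∑_{i=1}^k s_i t_i^n − ∑_{j=k+1}^r s_j (−t_j)^n` in
`ℚ[[t₁, …, t_r]]` (indices `0, …, k−1` are the "even" ones, `k, …, r−1` the "odd" ones). -/
noncomputable def baseSeries (r k n : ℕ) (s : Fin r → ℕ) : MvPowerSeries (Fin r) ℚ :=
  ∑ i : Fin r,
    if (i : ℕ) < k then (s i : ℚ) • (MvPowerSeries.X i) ^ n
    else - ((s i : ℚ) • (- MvPowerSeries.X i) ^ n)

/-- `H = ∑_{n=1}^∞ (μ(n)/n)·∑_{m=1}^∞ (1/m)·(P_n)^m`, defined coefficientwise: since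
`(P_n)^m` has order `≥ max n m`, only the terms with `n, m ≤ |α|` contribute to the
coefficient of the monomial `α`. -/
noncomputable def Hmv (r k : ℕ) (s : Fin r → ℕ) : MvPowerSeries (Fin r) ℚ :=
  fun α =>
    ∑ n ∈ Finset.Icc 1 (∑ i, α i), ∑ m ∈ Finset.Icc 1 (∑ i, α i),
      ((ArithmeticFunction.moebius n : ℚ) / n) * (m : ℚ)⁻¹ *
        MvPowerSeries.coeff (R := ℚ) α ((baseSeries r k n s) ^ m)

/-- Scalar coefficients of `baseSeries`. -/
noncomputable def cc (k n : ℕ) {r : ℕ} (s : Fin r → ℕ) (i : Fin r) : ℚ :=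
  if (i : ℕ) < k then (s i : ℚ) else (-1) ^ (n + 1) * s i

lemma baseSeries_eq (r k n : ℕ) (s : Fin r → ℕ) :
    baseSeries r k n s = ∑ i : Fin r,
      MvPowerSeries.C (σ := Fin r) (R := ℚ) (cc k n s i) * (MvPowerSeries.X i) ^ n := by
  unfold baseSeries cc
  refine Finset.sum_congr rfl fun i _ => ?_
  split_ifs with h
  · rw [smul_eq_C_mul]
  · rw [neg_pow, smul_eq_C_mul, ← mul_assoc, map_mul, map_pow, map_neg, map_one]
    ring

lemma prod_monomial {r : ℕ} (t : Finset (Fin r)) (d : Fin r → (Fin r →₀ ℕ)) :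
    ∏ i ∈ t, MvPowerSeries.monomial (R := ℚ) (d i) (1:ℚ) =
      MvPowerSeries.monomial (R := ℚ) (∑ i ∈ t, d i) 1 := by
  induction t using Finset.induction_on with
  | empty => simp
  | insert _ _ h ih =>
      rw [Finset.prod_insert h, Finset.sum_insert h, ih, monomial_mul_monomial, one_mul]

lemma coeff_prod_X_pow {r : ℕ} (e : Fin r → ℕ) (α : Fin r →₀ ℕ) :
    MvPowerSeries.coeff (R := ℚ) α (∏ i, (MvPowerSeries.X i : MvPowerSeries (Fin r) ℚ) ^ e i) =
      if ∀ i, α i = e i then 1 else 0 := by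
  simp_rw [MvPowerSeries.X_pow_eq]
  rw [prod_monomial, MvPowerSeries.coeff_monomial]
  congr 1
  simp only [eq_iff_iff]
  constructor
  · intro h i; rw [h]; simp [Finsupp.single_apply, Finset.sum_ite_eq']
  · intro h; ext j; simp [Finsupp.single_apply, Finset.sum_ite_eq', h j]

lemma coeff_baseSeries_pow (r k n : ℕ) (hn : 0 < n) (s : Fin r → ℕ) (m : ℕ) (α : Fin r →₀ ℕ) :
    MvPowerSeries.coeff (R := ℚ) α (baseSeries r k n s ^ m) =
      if (∀ i, n ∣ α i) ∧ (∑ i, α i) = n * m then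
        (Nat.multinomial univ (fun i => α i / n) : ℚ) * ∏ i, cc k n s i ^ (α i / n)
      else 0 := by
  rw [baseSeries_eq, Finset.sum_pow_eq_sum_piAntidiag, map_sum]
  have key : ∀ β : Fin r → ℕ, MvPowerSeries.coeff (R := ℚ) α
      ((Nat.multinomial univ β : MvPowerSeries (Fin r) ℚ) *
        ∏ i, (MvPowerSeries.C (σ := Fin r) (R := ℚ) (cc k n s i) * MvPowerSeries.X i ^ n) ^ β i) =
      (Nat.multinomial univ β : ℚ) * (∏ i, cc k n s i ^ β i) *
        (if ∀ i, α i = n * β i then 1 else 0) := by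
    intro β
    have h1 : ∀ i : Fin r, (MvPowerSeries.C (σ := Fin r) (R := ℚ) (cc k n s i) * MvPowerSeries.X i ^ n) ^ β i
        = MvPowerSeries.C (σ := Fin r) (R := ℚ) (cc k n s i ^ β i) * MvPowerSeries.X i ^ (n * β i) := by
      intro i; rw [mul_pow, ← map_pow, ← pow_mul]
    simp_rw [h1]
    rw [Finset.prod_mul_distrib, ← map_prod]
    rw [show ((Nat.multinomial univ β : ℕ) : MvPowerSeries (Fin r) ℚ)
        = MvPowerSeries.C (σ := Fin r) (R := ℚ) ((Nat.multinomial univ β : ℕ) : ℚ) from (map_natCast _ _).symm]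
    rw [← mul_assoc, ← map_mul, MvPowerSeries.coeff_C_mul, coeff_prod_X_pow]
  simp_rw [key]
  by_cases h : (∀ i, n ∣ α i) ∧ (∑ i, α i) = n * m
  · rw [if_pos h]
    rw [Finset.sum_eq_single (fun i => α i / n)]
    · rw [if_pos fun i => (Nat.mul_div_cancel' (h.1 i)).symm, mul_one]
    · intro β _ hβ
      rw [if_neg, mul_zero]
      intro hc
      exact hβ (funext fun i => by rw [hc i, Nat.mul_div_cancel_left _ hn])
    · intro hmem
      exfalso
      apply hmem
      rw [mem_piAntidiag]
      refine ⟨?_, fun i _ => mem_univ i⟩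
      have h2 : n * ∑ i, α i / n = ∑ i, α i := by
        rw [Finset.mul_sum]
        exact Finset.sum_congr rfl fun i _ => Nat.mul_div_cancel' (h.1 i)
      exact Nat.eq_of_mul_eq_mul_left hn (h2.trans h.2)
  · rw [if_neg h]
    refine Finset.sum_eq_zero fun β hβ => ?_
    rw [mem_piAntidiag] at hβ
    rw [if_neg, mul_zero]
    intro hc
    apply h
    refine ⟨fun i => ⟨β i, hc i⟩, ?_⟩
    rw [← hβ.1, Finset.mul_sum]
    exact Finset.sum_congr rfl fun i _ => hc i

lemma sum_div_nat {ι : Type*} (t : Finset ι) (f : ι → ℕ) (n : ℕ) (hn : 0 < n)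
    (h : ∀ i ∈ t, n ∣ f i) : ∑ i ∈ t, f i / n = (∑ i ∈ t, f i) / n := by
  have key : (∑ i ∈ t, f i / n) * n = ∑ i ∈ t, f i := by
    rw [Finset.sum_mul]
    exact Finset.sum_congr rfl fun i hi => Nat.div_mul_cancel (h i hi)
  rw [← key, Nat.mul_div_cancel _ hn]

lemma prod_cc {r : ℕ} (k n : ℕ) (s : Fin r → ℕ) (β : Fin r → ℕ) :
    ∏ i, cc k n s i ^ β i =
      (-1 : ℚ) ^ ((n+1) * ∑ i ∈ univ.filter (fun i : Fin r => k ≤ (i:ℕ)), β i) *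
        ∏ i, (s i : ℚ) ^ β i := by
  have hc : ∀ i : Fin r, cc k n s i = (if (i:ℕ) < k then (1:ℚ) else (-1)^(n+1)) * s i := by
    intro i; unfold cc; split_ifs <;> ring
  simp_rw [hc, mul_pow]
  rw [Finset.prod_mul_distrib]
  congr 1
  rw [← Finset.prod_filter_mul_prod_filter_not univ (fun i : Fin r => (i:ℕ) < k)]
  have h1 : ∏ i ∈ univ.filter (fun i : Fin r => (i:ℕ) < k),
      (if (i:ℕ) < k then (1:ℚ) else (-1)^(n+1)) ^ β i = 1 := by
    refine Finset.prod_eq_one fun i hi => ?_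
    rw [if_pos (Finset.mem_filter.mp hi).2, one_pow]
  have h2 : univ.filter (fun i : Fin r => ¬ (i:ℕ) < k)
      = univ.filter (fun i : Fin r => k ≤ (i:ℕ)) := by
    simp [not_lt]
  rw [h1, one_mul, h2]
  have h3 : ∏ i ∈ univ.filter (fun i : Fin r => k ≤ (i:ℕ)),
      (if (i:ℕ) < k then (1:ℚ) else (-1)^(n+1)) ^ β i
      = ∏ i ∈ univ.filter (fun i : Fin r => k ≤ (i:ℕ)), ((-1:ℚ)^(n+1)) ^ β i :=
    Finset.prod_congr rfl fun i hi => by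
      rw [if_neg (not_lt.mpr (Finset.mem_filter.mp hi).2)]
  rw [h3, Finset.prod_pow_eq_pow_sum, ← pow_mul]

/-- The multigraded Witt formula for free color Lie superalgebras: for every nonzero
multi-index `α`, the coefficient of `t₁^{α₁}⋯t_r^{α_r}` in
`H = −∑_{n≥1} (μ(n)/n)·log(1 − ∑_{i≤k} s_i t_i^n + ∑_{j>k} s_j(−t_j)^n)` equals
`((−1)^{|α|₋}/|α|)·∑_{n ∣ α} μ(n)·((|α|/n)!·(−1)^{|α|₋/n}/((α₁/n)!⋯(α_r/n)!))·∏ s_i^{α_i/n}`,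
where `|α| = ∑ αᵢ` and `|α|₋ = α_{k+1} + ⋯ + α_r`, and `n ∣ α` means `n` divides every
component of `α`. -/
theorem coeff_Hmv (r k : ℕ) (hr : 1 ≤ r) (hk : k ≤ r) (s : Fin r → ℕ)
    (hs : ∀ i, 0 < s i) (α : Fin r →₀ ℕ) (hα : α ≠ 0) :
    MvPowerSeries.coeff (R := ℚ) α (Hmv r k s) =
      ((-1 : ℚ) ^ (∑ i ∈ Finset.univ.filter fun i : Fin r => k ≤ (i : ℕ), α i) /
          (∑ i, α i : ℕ)) *
        ∑ n ∈ (∑ i, α i).divisors.filter fun n => ∀ i, n ∣ α i,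
          (ArithmeticFunction.moebius n : ℚ) *
            ((Nat.factorial ((∑ i, α i) / n) : ℚ) *
                (-1 : ℚ) ^ ((∑ i ∈ Finset.univ.filter fun i : Fin r => k ≤ (i : ℕ), α i) / n) /
              ∏ i, (Nat.factorial (α i / n) : ℚ)) *
            ∏ i, (s i : ℚ) ^ (α i / n) := by
  classical
  set N := ∑ i, α i with hNdef
  set M := ∑ i ∈ univ.filter (fun i : Fin r => k ≤ (i:ℕ)), α i with hMdef
  have hN0 : N ≠ 0 := by
    intro h0
    apply hα
    ext i
    have : ∑ j, α j = 0 := by rw [← hNdef, h0]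
    exact Finset.sum_eq_zero_iff.mp this i (mem_univ i)
  have hNpos : 0 < N := Nat.pos_of_ne_zero hN0
  have hcoeff : (MvPowerSeries.coeff (R := ℚ) α) (Hmv r k s) =
      ∑ n ∈ Icc 1 N, ∑ m ∈ Icc 1 N,
        ((ArithmeticFunction.moebius n : ℚ) / n) * (m : ℚ)⁻¹ *
          MvPowerSeries.coeff (R := ℚ) α ((baseSeries r k n s) ^ m) := rfl
  rw [hcoeff]
  set W : ℕ → ℚ := fun n =>
    (Nat.multinomial univ (fun i => α i / n) : ℚ) * ∏ i, cc k n s i ^ (α i / n) with hW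
  have step1 : ∀ n ∈ Icc 1 N,
      (∑ m ∈ Icc 1 N, ((ArithmeticFunction.moebius n : ℚ) / n) * (m : ℚ)⁻¹ *
        MvPowerSeries.coeff (R := ℚ) α ((baseSeries r k n s) ^ m)) =
      if ∀ i, n ∣ α i then
        ((ArithmeticFunction.moebius n : ℚ) / n) * ((N / n : ℕ) : ℚ)⁻¹ * W n else 0 := by
    intro n hn
    rw [mem_Icc] at hn
    have hnpos : 0 < n := hn.1
    by_cases hdvd : ∀ i, n ∣ α i
    · rw [if_pos hdvd]
      have hNdvd : n ∣ N := hNdef ▸ Finset.dvd_sum fun i _ => hdvd i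
      rw [Finset.sum_eq_single (N / n)]
      · rw [coeff_baseSeries_pow r k n hnpos s,
          if_pos ⟨hdvd, (Nat.mul_div_cancel' hNdvd).symm⟩]
      · intro m _ hne
        rw [coeff_baseSeries_pow r k n hnpos s, if_neg, mul_zero]
        rintro ⟨-, hc⟩
        exact hne (by rw [hNdef, hc, Nat.mul_div_cancel_left _ hnpos])
      · intro hcon
        exfalso
        apply hcon
        rw [mem_Icc]
        exact ⟨(Nat.one_le_div_iff hnpos).mpr (Nat.le_of_dvd hNpos hNdvd), Nat.div_le_self _ _⟩
    · rw [if_neg hdvd]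
      refine Finset.sum_eq_zero fun m _ => ?_
      rw [coeff_baseSeries_pow r k n hnpos s, if_neg (fun hc => hdvd hc.1), mul_zero]
  rw [Finset.sum_congr rfl step1, ← Finset.sum_filter]
  have hset : (Icc 1 N).filter (fun n => ∀ i, n ∣ α i)
      = N.divisors.filter (fun n => ∀ i, n ∣ α i) := by
    ext n
    simp only [mem_filter, mem_Icc, Nat.mem_divisors]
    constructor
    · rintro ⟨⟨h1, h2⟩, h3⟩
      exact ⟨⟨hNdef ▸ Finset.dvd_sum fun i _ => h3 i, hN0⟩, h3⟩
    · rintro ⟨⟨h1, h2⟩, h3⟩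
      have hn0 : n ≠ 0 := by rintro rfl; rw [zero_dvd_iff] at h1; exact hN0 h1
      exact ⟨⟨Nat.one_le_iff_ne_zero.mpr hn0, Nat.le_of_dvd hNpos h1⟩, h3⟩
  rw [hset, Finset.mul_sum]
  refine Finset.sum_congr rfl fun n hn => ?_
  rw [mem_filter, Nat.mem_divisors] at hn
  obtain ⟨⟨hNdvd, -⟩, hdvd⟩ := hn
  have hn0 : n ≠ 0 := by rintro rfl; rw [zero_dvd_iff] at hNdvd; exact hN0 hNdvd
  have hnpos : 0 < n := Nat.pos_of_ne_zero hn0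
  have hMdvd : n ∣ M := hMdef ▸ Finset.dvd_sum fun i _ => hdvd i
  -- compute W n
  have hsum_filter : ∑ i ∈ univ.filter (fun i : Fin r => k ≤ (i:ℕ)), α i / n = M / n := by
    rw [hMdef]; exact sum_div_nat _ _ n hnpos fun i _ => hdvd i
  have hsum_univ : ∑ i : Fin r, α i / n = N / n := by
    rw [hNdef]; exact sum_div_nat _ _ n hnpos fun i _ => hdvd i
  have hsign : (-1 : ℚ) ^ ((n+1) * (M / n)) = (-1) ^ M * (-1) ^ (M / n) := by
    have h1 : (n+1) * (M/n) = n * (M/n) + M/n := by ring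
    rw [h1, pow_add, Nat.mul_div_cancel' hMdvd]
  have hWn : W n = ((Nat.factorial (N / n) : ℚ) / ∏ i, (Nat.factorial (α i / n) : ℚ)) *
      ((-1) ^ M * (-1) ^ (M / n)) * ∏ i, (s i : ℚ) ^ (α i / n) := by
    rw [hW]
    simp only
    rw [prod_cc, hsum_filter, hsign]
    have hspec := Nat.multinomial_spec univ (fun i => α i / n)
    rw [hsum_univ] at hspec
    have hspecQ : (∏ i, (Nat.factorial (α i / n) : ℚ)) *
        (Nat.multinomial univ (fun i => α i / n) : ℚ) = (Nat.factorial (N / n) : ℚ) := by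
      exact_mod_cast congrArg (Nat.cast : ℕ → ℚ) hspec
    have hprodne : (∏ i, (Nat.factorial (α i / n) : ℚ)) ≠ 0 :=
      Finset.prod_ne_zero_iff.mpr fun i _ => Nat.cast_ne_zero.mpr (Nat.factorial_ne_zero _)
    have hmulteq : (Nat.multinomial univ (fun i => α i / n) : ℚ) =
        (Nat.factorial (N / n) : ℚ) / ∏ i, (Nat.factorial (α i / n) : ℚ) := by
      field_simp
      linarith [hspecQ]
    rw [hmulteq]
    ring
  rw [hWn]
  have hcast : ((N / n : ℕ) : ℚ) = (N : ℚ) / (n : ℚ) := by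
    rw [Nat.cast_div hNdvd (Nat.cast_ne_zero.mpr hn0)]
  rw [hcast]
  have hNQ : (N : ℚ) ≠ 0 := Nat.cast_ne_zero.mpr hN0
  have hnQ : (n : ℚ) ≠ 0 := Nat.cast_ne_zero.mpr hn0
  have hprodne : (∏ i, (Nat.factorial (α i / n) : ℚ)) ≠ 0 :=
    Finset.prod_ne_zero_iff.mpr fun i _ => Nat.cast_ne_zero.mpr (Nat.factorial_ne_zero _)
  field_simp
end

section
/- Fix a prime p and integers r ≥ 1, n ≥ 1. Then n divides ∑_{m ∣ n} μ_p(m)·r^{n/m} (sum over positive divisors m of n), and the quotient (1/n)·∑_{m ∣ n} μ_p(m)·r^{n/m} is a nonnegative integer. -/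
/-- The function `μ_p : ℕ → ℤ`: `μ_p(n) = μ(n)` if `p ∤ n`, and
`μ_p(n) = μ(m)·(p^s − p^{s−1})` if `n = m·p^s` with `p ∤ m` and `s ≥ 1`. -/
def mup (p n : ℕ) : ℤ :=
  if p ∣ n then
    (ArithmeticFunction.moebius (n / p ^ (n.factorization p))) *
      ((p : ℤ) ^ (n.factorization p) - (p : ℤ) ^ (n.factorization p - 1))
  else ArithmeticFunction.moebius n

open ArithmeticFunction Finset
open scoped ArithmeticFunction.Moebius

/-- Fermat's little theorem for integers. -/
lemma fermat_int_aux {q : ℕ} (hq : q.Prime) (y : ℤ) : (q : ℤ) ∣ y ^ q - y := by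
  haveI := Fact.mk hq
  have : ((y ^ q - y : ℤ) : ZMod q) = 0 := by
    push_cast
    rw [ZMod.pow_card]
    ring
  exact (ZMod.intCast_zmod_eq_zero_iff_dvd _ _).mp this

lemma key_pow_dvd_aux {q : ℕ} (hq : q.Prime) {k : ℕ} (hk : 1 ≤ k) (y : ℤ) :
    (q : ℤ) ^ k ∣ y ^ q ^ k - y ^ q ^ (k - 1) := by
  obtain ⟨t, rfl⟩ : ∃ t, k = t + 1 := ⟨k - 1, (Nat.succ_pred_eq_of_pos hk).symm⟩
  have h := dvd_sub_pow_of_dvd_sub (fermat_int_aux hq y) t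
  simpa [← pow_mul, ← pow_succ'] using h

/-- Prime power part of the Gauss congruence. -/
lemma gauss_prime_pow_aux (x : ℤ) {q n : ℕ} (hq : q.Prime) (hn : n ≠ 0) :
    (q : ℤ) ^ (n.factorization q) ∣ ∑ d ∈ n.divisors, (μ d : ℤ) * x ^ (n / d) := by
  rcases Nat.eq_zero_or_pos (n.factorization q) with h0 | hpos
  · simp [h0]
  set k := n.factorization q with hk
  set M := n / q ^ k with hM
  have hqdvd : q ^ k ∣ n := Nat.ordProj_dvd n q
  have hMn : q ^ k * M = n := Nat.ordProj_mul_ordCompl_eq_self n q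
  have hM0 : M ≠ 0 := by
    intro h; rw [h, mul_zero] at hMn; exact hn hMn.symm
  have hqM : ¬ q ∣ M := Nat.not_dvd_ordCompl hq hn
  have hfilt : n.divisors.filter (fun d => ¬ q ∣ d) = M.divisors := by
    ext d
    simp only [mem_filter, Nat.mem_divisors]
    constructor
    · rintro ⟨⟨hdn, -⟩, hqd⟩
      refine ⟨?_, hM0⟩
      have hcop : Nat.Coprime d (q ^ k) :=
        Nat.Coprime.pow_right _ ((Nat.coprime_comm.mp (hq.coprime_iff_not_dvd.mpr hqd)))
      exact (Nat.Coprime.dvd_of_dvd_mul_left hcop (by rwa [hMn]))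
    · rintro ⟨hdM, -⟩
      exact ⟨⟨hdM.trans (Dvd.intro_left _ hMn), hn⟩, fun hqd => hqM (hqd.trans hdM)⟩
  have himage : ∀ d ∈ n.divisors.filter (fun d => q ∣ d),
      d ∉ M.divisors.image (fun d => q * d) → (μ d : ℤ) * x ^ (n / d) = 0 := by
    intro d hd hdim
    simp only [mem_filter, Nat.mem_divisors] at hd
    obtain ⟨⟨hdn, -⟩, c, rfl⟩ := hd
    rcases em (q ∣ c) with hqc | hqc
    · have hns : ¬ Squarefree (q * c) := fun hs =>
        hq.prime.not_unit (hs q (mul_dvd_mul_left q hqc))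
      rw [moebius_eq_zero_of_not_squarefree hns]
      ring
    · exfalso
      apply hdim
      refine mem_image.mpr ⟨c, Nat.mem_divisors.mpr ⟨?_, hM0⟩, rfl⟩
      have hcop : Nat.Coprime c (q ^ k) :=
        Nat.Coprime.pow_right _ (Nat.coprime_comm.mp (hq.coprime_iff_not_dvd.mpr hqc))
      exact hcop.dvd_of_dvd_mul_left (by rw [hMn]; exact (dvd_mul_left c q).trans hdn)
  have hsub : M.divisors.image (fun d => q * d) ⊆ n.divisors.filter (fun d => q ∣ d) := by
    intro d hd
    obtain ⟨c, hc, rfl⟩ := mem_image.mp hd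
    rw [Nat.mem_divisors] at hc
    refine mem_filter.mpr ⟨Nat.mem_divisors.mpr ⟨?_, hn⟩, dvd_mul_right q c⟩
    calc q * c ∣ q ^ k * M := mul_dvd_mul (dvd_pow_self q hpos.ne') hc.1
    _ = n := hMn
  have hinj : Set.InjOn (fun d => q * d) M.divisors :=
    fun a _ b _ h => Nat.eq_of_mul_eq_mul_left hq.pos h
  have split := Finset.sum_filter_add_sum_filter_not n.divisors (fun d => q ∣ d)
      (fun d => (μ d : ℤ) * x ^ (n / d))
  rw [← split, hfilt, ← Finset.sum_subset hsub himage, Finset.sum_image hinj]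
  have hstep : ∀ d ∈ M.divisors,
      (μ (q * d) : ℤ) * x ^ (n / (q * d)) + (μ d : ℤ) * x ^ (n / d)
        = (μ d : ℤ) * ((x ^ (M / d)) ^ q ^ k - (x ^ (M / d)) ^ q ^ (k - 1)) := by
    intro d hd
    rw [Nat.mem_divisors] at hd
    have hqd : ¬ q ∣ d := fun h => hqM (h.trans hd.1)
    have hmu : (μ (q * d) : ℤ) = -(μ d) := by
      rw [isMultiplicative_moebius.map_mul_of_coprime (hq.coprime_iff_not_dvd.mpr hqd),
        moebius_apply_prime hq]
      ring
    have h1 : n / d = M / d * q ^ k := by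
      rw [← hMn, Nat.mul_div_assoc _ hd.1, mul_comm]
    have h2 : n / (q * d) = M / d * q ^ (k - 1) := by
      rw [mul_comm q d, ← Nat.div_div_eq_div_mul, h1,
        Nat.mul_div_assoc _ (dvd_pow_self q hpos.ne'),
        show q ^ k / q = q ^ (k - 1) by rw [← Nat.pow_div hpos hq.pos, pow_one]]
    rw [hmu, h1, h2, pow_mul, pow_mul]
    ring
  rw [← Finset.sum_add_distrib, Finset.sum_congr rfl hstep]
  exact Finset.dvd_sum fun d _ => Dvd.dvd.mul_left (key_pow_dvd_aux hq hpos _) _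

/-- The Gauss congruence. -/
lemma gauss_dvd_aux (x : ℤ) {n : ℕ} (hn : n ≠ 0) :
    (n : ℤ) ∣ ∑ d ∈ n.divisors, (μ d : ℤ) * x ^ (n / d) := by
  have hfac : (n : ℤ) = ∏ q ∈ n.primeFactors, (q : ℤ) ^ (n.factorization q) := by
    conv_lhs => rw [← Nat.factorization_prod_pow_eq_self hn]
    rw [Nat.prod_factorization_eq_prod_primeFactors]
    push_cast
    rfl
  rw [hfac]
  apply Finset.prod_dvd_of_coprime
  · intro a ha b hb hab
    have hap := Nat.prime_of_mem_primeFactors ha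
    have hbp := Nat.prime_of_mem_primeFactors hb
    exact (IsCoprime.pow (Int.isCoprime_iff_gcd_eq_one.mpr (by
      simpa [Int.gcd_natCast_natCast] using (Nat.coprime_primes hap hbp).mpr hab)))
  · intro q hq
    exact gauss_prime_pow_aux x (Nat.prime_of_mem_primeFactors hq) hn

lemma geom_bound_aux {r : ℤ} (hr : 2 ≤ r) (n : ℕ) : ∑ i ∈ range n, r ^ i ≤ r ^ n := by
  induction n with
  | zero => simp
  | succ n ih =>
    rw [sum_range_succ, pow_succ]
    nlinarith [pow_nonneg (by linarith : (0:ℤ) ≤ r) n]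

lemma sum_moebius_nonneg_aux (n : ℕ) : 0 ≤ ∑ d ∈ n.divisors, (μ d : ℤ) := by
  have := coe_mul_zeta_apply (f := (μ : ArithmeticFunction ℤ)) (x := n)
  rw [moebius_mul_coe_zeta] at this
  rw [← this, one_apply]
  split_ifs <;> norm_num

/-- Nonnegativity of the Witt necklace sums. -/
lemma W_nonneg_aux {r : ℕ} (hr : 1 ≤ r) {n : ℕ} (hn : n ≠ 0) :
    0 ≤ ∑ d ∈ n.divisors, (μ d : ℤ) * (r : ℤ) ^ (n / d) := by
  rcases eq_or_lt_of_le hr with h1 | h2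
  · simp only [← h1]
    norm_num
    exact sum_moebius_nonneg_aux n
  have hr2 : (2 : ℤ) ≤ (r : ℤ) := by exact_mod_cast h2
  have hrw : ∑ d ∈ n.divisors, (μ d : ℤ) * (r : ℤ) ^ (n / d)
      = ∑ d ∈ n.divisors, (μ (n / d) : ℤ) * (r : ℤ) ^ d := by
    rw [← Nat.sum_div_divisors n (fun d => (μ (n / d) : ℤ) * (r : ℤ) ^ d)]
    exact Finset.sum_congr rfl fun d hd => by
      rw [Nat.div_div_self (Nat.mem_divisors.mp hd).1 hn]
  rw [hrw]
  have hmem : n ∈ n.divisors := Nat.mem_divisors_self n hn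
  rw [← Finset.add_sum_erase _ _ hmem, Nat.div_self (Nat.pos_of_ne_zero hn),
    moebius_apply_one]
  have hbound : ∀ d ∈ n.divisors.erase n, -((r:ℤ) ^ d) ≤ (μ (n / d) : ℤ) * (r : ℤ) ^ d := by
    intro d hd
    have h1 : (-1 : ℤ) ≤ (μ (n / d) : ℤ) := neg_le_of_abs_le abs_moebius_le_one
    nlinarith [pow_nonneg (by linarith : (0:ℤ) ≤ (r:ℤ)) d]
  have hsub : n.divisors.erase n ⊆ range n := by
    intro d hd
    rw [Finset.mem_erase, Nat.mem_divisors] at hd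
    exact Finset.mem_range.mpr (lt_of_le_of_ne (Nat.le_of_dvd (Nat.pos_of_ne_zero hn) hd.2.1) hd.1)
  have h3 : -((r:ℤ) ^ n) ≤ ∑ d ∈ n.divisors.erase n, (μ (n / d) : ℤ) * (r : ℤ) ^ d := by
    calc -((r:ℤ) ^ n) ≤ -∑ i ∈ range n, (r:ℤ) ^ i := by
          simpa using neg_le_neg (geom_bound_aux hr2 n)
      _ ≤ -∑ d ∈ n.divisors.erase n, (r:ℤ) ^ d := by
          apply neg_le_neg
          exact Finset.sum_le_sum_of_subset_of_nonneg hsub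
            (fun i _ _ => pow_nonneg (by linarith) i)
      _ = ∑ d ∈ n.divisors.erase n, -((r:ℤ) ^ d) := by rw [Finset.sum_neg_distrib]
      _ ≤ _ := Finset.sum_le_sum hbound
  linarith

/-- Expansion of `μ_p` as a sum over powers of `p`. -/
lemma mup_eq_sum_aux {p : ℕ} (hp : p.Prime) {m : ℕ} (hm : m ≠ 0) :
    mup p m = ∑ j ∈ range (m.factorization p + 1), (p : ℤ) ^ j * (μ (m / p ^ j) : ℤ) := by
  have hquot : ∀ j, j ≤ m.factorization p →
      m / p ^ j = (m / p ^ (m.factorization p)) * p ^ (m.factorization p - j) := by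
    intro j hj
    conv_lhs => rw [← Nat.ordProj_mul_ordCompl_eq_self m p]
    rw [show p ^ (m.factorization p) = p ^ j * p ^ (m.factorization p - j) by
      rw [← pow_add, Nat.add_sub_cancel' hj], mul_assoc,
      Nat.mul_div_cancel_left _ (pow_pos hp.pos j), mul_comm]
  by_cases hpm : p ∣ m
  · have hs : 1 ≤ m.factorization p := hp.factorization_pos_of_dvd hm hpm
    have hpd : ¬ p ∣ m / p ^ (m.factorization p) := Nat.not_dvd_ordCompl hp hm
    obtain ⟨t, ht⟩ : ∃ t, m.factorization p = t + 1 :=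
      ⟨_, (Nat.succ_pred_eq_of_pos hs).symm⟩
    rw [mup, if_pos hpm, ht, sum_range_succ, sum_range_succ]
    have h0 : ∀ j ∈ range t, (p : ℤ) ^ j * (μ (m / p ^ j) : ℤ) = 0 := by
      intro j hj
      rw [mem_range] at hj
      have : ¬ Squarefree (m / p ^ j) := by
        rw [hquot j (by omega)]
        intro hsq
        exact hp.prime.not_unit (hsq p (by
          rw [← pow_two]
          exact dvd_mul_of_dvd_right (pow_dvd_pow p (by omega)) _))
      rw [moebius_eq_zero_of_not_squarefree this]
      ring
    rw [Finset.sum_eq_zero h0, hquot t (by omega), hquot (t + 1) (by omega), ht]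
    have hmu : (μ (m / p ^ (t + 1) * p) : ℤ) = -(μ (m / p ^ (t + 1)) : ℤ) := by
      rw [mul_comm, isMultiplicative_moebius.map_mul_of_coprime
        (hp.coprime_iff_not_dvd.mpr (ht ▸ hpd)), moebius_apply_prime hp]
      ring
    rw [show t + 1 - t = 1 by omega, pow_one, show t + 1 - 1 = t by omega,
      show t + 1 - (t + 1) = 0 by omega, pow_zero, mul_one, hmu]
    ring
  · rw [mup, if_neg hpm, Nat.factorization_eq_zero_of_not_dvd hpm]
    simp

/-- Fix a prime `p` and integers `r ≥ 1`, `n ≥ 1`. Then `n` divides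
`∑_{m ∣ n} μ_p(m)·r^{n/m}`, and the quotient `(1/n)·∑_{m ∣ n} μ_p(m)·r^{n/m}` is a
nonnegative integer. -/
theorem restricted_witt_dvd_nonneg (p : ℕ) (hp : p.Prime) (r n : ℕ) (hr : 1 ≤ r)
    (hn : 1 ≤ n) :
    (n : ℤ) ∣ (∑ m ∈ n.divisors, mup p m * (r : ℤ) ^ (n / m)) ∧
      0 ≤ (∑ m ∈ n.divisors, mup p m * (r : ℤ) ^ (n / m)) / (n : ℤ) := by
  have hn0 : n ≠ 0 := by omega
  set e := n.factorization p with he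
  have step1 : ∀ m ∈ n.divisors, mup p m * (r : ℤ) ^ (n / m)
      = ∑ j ∈ range (e + 1),
          (if p ^ j ∣ m then (p : ℤ) ^ j * (μ (m / p ^ j) : ℤ) * (r : ℤ) ^ (n / m) else 0) := by
    intro m hm
    rw [Nat.mem_divisors] at hm
    have hm0 : m ≠ 0 := fun h => hn0 (zero_dvd_iff.mp (h ▸ hm.1))
    have hle : m.factorization p ≤ e := by
      rw [he]
      exact (Nat.factorization_le_iff_dvd hm0 hn0).mpr hm.1 p
    rw [mup_eq_sum_aux hp hm0, Finset.sum_mul]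
    have hext : ∑ j ∈ range (e + 1),
        (if p ^ j ∣ m then (p : ℤ) ^ j * (μ (m / p ^ j) : ℤ) * (r : ℤ) ^ (n / m) else 0)
        = ∑ j ∈ range (m.factorization p + 1),
        (if p ^ j ∣ m then (p : ℤ) ^ j * (μ (m / p ^ j) : ℤ) * (r : ℤ) ^ (n / m) else 0) := by
      refine (Finset.sum_subset (Finset.range_subset_range.mpr (by omega)) ?_).symm
      intro j hj hj2
      rw [mem_range] at hj hj2
      exact if_neg fun hdvd => Nat.pow_succ_factorization_not_dvd hm0 hp
        ((pow_dvd_pow p (by omega)).trans hdvd)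
    rw [hext]
    refine Finset.sum_congr rfl fun j hj => ?_
    rw [mem_range] at hj
    rw [if_pos (((pow_dvd_pow p (by omega)).trans (Nat.ordProj_dvd m p)))]
  rw [Finset.sum_congr rfl step1, Finset.sum_comm]
  have step2 : ∀ j ∈ range (e + 1),
      (∑ m ∈ n.divisors,
        if p ^ j ∣ m then (p : ℤ) ^ j * (μ (m / p ^ j) : ℤ) * (r : ℤ) ^ (n / m) else 0)
      = (p : ℤ) ^ j * ∑ k ∈ (n / p ^ j).divisors, (μ k : ℤ) * (r : ℤ) ^ (n / p ^ j / k) := by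
    intro j hj
    rw [mem_range] at hj
    have hpjn : p ^ j ∣ n := (pow_dvd_pow p (by omega)).trans (Nat.ordProj_dvd n p)
    have hq0 : n / p ^ j ≠ 0 :=
      Nat.div_ne_zero_iff_of_dvd hpjn |>.mpr ⟨hn0, pow_ne_zero j hp.pos.ne'⟩
    rw [← Finset.sum_filter]
    have himg : n.divisors.filter (fun m => p ^ j ∣ m)
        = (n / p ^ j).divisors.image (fun k => k * p ^ j) := by
      ext m
      simp only [mem_filter, Nat.mem_divisors, mem_image]
      constructor
      · rintro ⟨⟨hmn, -⟩, hdvd⟩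
        exact ⟨m / p ^ j, ⟨(Nat.dvd_div_iff_mul_dvd hpjn).mpr
          (by rwa [mul_comm, Nat.div_mul_cancel hdvd]), hq0⟩, Nat.div_mul_cancel hdvd⟩
      · rintro ⟨k, ⟨hk, -⟩, rfl⟩
        refine ⟨⟨?_, hn0⟩, dvd_mul_left _ _⟩
        have := (Nat.dvd_div_iff_mul_dvd hpjn).mp hk
        rwa [mul_comm] at this
    rw [himg, Finset.sum_image (fun a _ b _ h =>
      Nat.eq_of_mul_eq_mul_right (pow_pos hp.pos j) h), Finset.mul_sum]
    refine Finset.sum_congr rfl fun k hk => ?_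
    rw [Nat.mul_div_cancel _ (pow_pos hp.pos j), mul_comm k (p ^ j),
      ← Nat.div_div_eq_div_mul]
    ring
  rw [Finset.sum_congr rfl step2]
  have hdvd : (n : ℤ) ∣ ∑ j ∈ range (e + 1),
      (p : ℤ) ^ j * ∑ k ∈ (n / p ^ j).divisors, (μ k : ℤ) * (r : ℤ) ^ (n / p ^ j / k) := by
    refine Finset.dvd_sum fun j hj => ?_
    rw [mem_range] at hj
    have hpjn : p ^ j ∣ n := (pow_dvd_pow p (by omega)).trans (Nat.ordProj_dvd n p)
    have hq0 : n / p ^ j ≠ 0 :=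
      Nat.div_ne_zero_iff_of_dvd hpjn |>.mpr ⟨hn0, pow_ne_zero j hp.pos.ne'⟩
    have hcast : (n : ℤ) = (p : ℤ) ^ j * ((n / p ^ j : ℕ) : ℤ) := by
      rw [← Nat.cast_pow, ← Nat.cast_mul, Nat.mul_div_cancel' hpjn]
    rw [hcast]
    exact mul_dvd_mul_left _ (gauss_dvd_aux (r : ℤ) hq0)
  have hnonneg : 0 ≤ ∑ j ∈ range (e + 1),
      (p : ℤ) ^ j * ∑ k ∈ (n / p ^ j).divisors, (μ k : ℤ) * (r : ℤ) ^ (n / p ^ j / k) := by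
    refine Finset.sum_nonneg fun j hj => ?_
    rw [mem_range] at hj
    have hpjn : p ^ j ∣ n := (pow_dvd_pow p (by omega)).trans (Nat.ordProj_dvd n p)
    have hq0 : n / p ^ j ≠ 0 :=
      Nat.div_ne_zero_iff_of_dvd hpjn |>.mpr ⟨hn0, pow_ne_zero j hp.pos.ne'⟩
    exact mul_nonneg (pow_nonneg (by positivity) j) (W_nonneg_aux hr hq0)
  exact ⟨hdvd, Int.ediv_nonneg hnonneg (by positivity)⟩
end

section
/- Let r ≥ 1, 0 ≤ k ≤ r, and n ≥ 1. Then n divides ∑_{m ∣ n} μ(m)·(k − (−1)^m(r − k))^{n/m} (sum over positive divisors m of n), and the quotient (1/n)·∑_{m ∣ n} μ(m)·(k − (−1)^m(r − k))^{n/m} is a nonnegative integer. -/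
/-- The integer `k − (−1)^m (r − k)` (with `0 ≤ k ≤ r`). -/
def csgn (r k m : ℕ) : ℤ := (k : ℤ) - (-1) ^ m * ((r : ℤ) - (k : ℤ))

open Finset ArithmeticFunction

lemma csgn_odd (r k m : ℕ) (h : Odd m) : csgn r k m = r := by
  rw [csgn, h.neg_one_pow]; ring

lemma csgn_even (r k m : ℕ) (h : Even m) : csgn r k m = 2 * (k : ℤ) - r := by
  rw [csgn, h.neg_one_pow]; ring

lemma csgn_abs_le (r k m : ℕ) (hk : k ≤ r) : |csgn r k m| ≤ (r : ℤ) := by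
  rcases Nat.even_or_odd m with h | h
  · rw [csgn_even r k m h, abs_le]; omega
  · rw [csgn_odd r k m h]; simp

lemma int_fermat (p : ℕ) (hp : p.Prime) (a : ℤ) : (p : ℤ) ∣ a ^ p - a := by
  haveI : Fact p.Prime := ⟨hp⟩
  have : ((a ^ p - a : ℤ) : ZMod p) = 0 := by push_cast [ZMod.pow_card]; ring
  exact (ZMod.intCast_zmod_eq_zero_iff_dvd _ _).mp this

lemma two_mul_le_pow {x : ℕ} (hx : 1 ≤ x) : 2 * x ≤ 2 ^ x := by
  induction x with
  | zero => omega
  | succ m ih =>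
    rcases Nat.eq_zero_or_pos m with rfl | hm
    · norm_num
    · have h1 := ih hm
      have h2 : 2 ≤ 2 ^ m := Nat.one_lt_two_pow_iff.mpr (by omega)
      rw [pow_succ]
      omega

lemma nat_le_two_pow_half (n : ℕ) : n ≤ 2 ^ (n - n / 2) := by
  rcases Nat.eq_zero_or_pos n with rfl | hn
  · simp
  have h1 : n ≤ 2 * (n - n / 2) := by omega
  have h2 : 1 ≤ n - n / 2 := by omega
  exact h1.trans (two_mul_le_pow h2)

lemma aux_dvd (p : ℕ) (w m : ℕ) (a b : ℤ) (hab : (p : ℤ) ∣ a ^ (p * m) - b ^ m) :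
    (p : ℤ) ^ (w + 1) ∣ a ^ (p ^ (w + 1) * m) - b ^ (p ^ w * m) := by
  have e1 : a ^ (p ^ (w + 1) * m) = (a ^ (p * m)) ^ p ^ w := by
    rw [← pow_mul]; congr 1; ring
  have e2 : b ^ (p ^ w * m) = (b ^ m) ^ p ^ w := by
    rw [← pow_mul, mul_comm]
  rw [e1, e2]
  exact dvd_sub_pow_of_dvd_sub hab w

lemma csgn_two_dvd (r k e : ℕ) : (2 : ℤ) ∣ csgn r k (2 * e) - csgn r k e := by
  rcases Nat.even_or_odd e with he | he
  · rw [csgn_even r k (2 * e) (he.mul_left 2), csgn_even r k e he]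
    simp
  · rw [csgn_even r k (2 * e) (even_two_mul e), csgn_odd r k e he]
    exact ⟨(k : ℤ) - r, by ring⟩

lemma step_dvd (r k p m e : ℕ) (hpp : p.Prime) :
    (p : ℤ) ∣ csgn r k e ^ (p * m) - csgn r k (p * e) ^ m := by
  rcases hpp.eq_two_or_odd' with rfl | hodd
  · haveI : Fact (Nat.Prime 2) := ⟨Nat.prime_two⟩
    have hb : ((csgn r k (2 * e) : ℤ) : ZMod 2) = ((csgn r k e : ℤ) : ZMod 2) := by
      have := csgn_two_dvd r k e
      have h0 : ((csgn r k (2 * e) - csgn r k e : ℤ) : ZMod 2) = 0 :=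
        (ZMod.intCast_zmod_eq_zero_iff_dvd _ _).mpr this
      push_cast at h0
      linear_combination h0
    have : ((csgn r k e ^ (2 * m) - csgn r k (2 * e) ^ m : ℤ) : ZMod 2) = 0 := by
      push_cast
      rw [hb, pow_mul, ZMod.pow_card]
      ring
    exact_mod_cast (ZMod.intCast_zmod_eq_zero_iff_dvd _ _).mp this
  · have hc : csgn r k (p * e) = csgn r k e := by
      rcases Nat.even_or_odd e with he | he
      · rw [csgn_even r k (p * e) (he.mul_left p), csgn_even r k e he]
      · rw [csgn_odd r k (p * e) (hodd.mul he), csgn_odd r k e he]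
    rw [hc]
    have : csgn r k e ^ (p * m) = (csgn r k e ^ m) ^ p := by
      rw [← pow_mul, mul_comm]
    rw [this]
    exact int_fermat p hpp _

lemma prime_pow_dvd_sum (r k n : ℕ) (hn0 : n ≠ 0) (p : ℕ) (hpp : p.Prime)
    (hv : 1 ≤ n.factorization p) :
    (p : ℤ) ^ (n.factorization p) ∣
      ∑ m ∈ n.divisors, (moebius m : ℤ) * csgn r k m ^ (n / m) := by
  obtain ⟨w, hw⟩ : ∃ w, n.factorization p = w + 1 := ⟨n.factorization p - 1, by omega⟩
  set v := n.factorization p with hv'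
  set t := n / p ^ v with ht'
  have hnt : p ^ v * t = n := Nat.ordProj_mul_ordCompl_eq_self n p
  have hpt : ¬ p ∣ t := Nat.not_dvd_ordCompl hpp hn0
  have ht0 : t ≠ 0 := by
    intro h; rw [h, mul_zero] at hnt; exact hn0 hnt.symm
  have hp0 : 0 < p := hpp.pos
  set f : ℕ → ℤ := fun d => (moebius d : ℤ) * csgn r k d ^ (n / d) with hf
  have hsub : t.divisors ∪ t.divisors.image (fun e => p * e) ⊆ n.divisors := by
    intro d hd
    rcases Finset.mem_union.mp hd with h | h
    · obtain ⟨hdt, -⟩ := Nat.mem_divisors.mp h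
      exact Nat.mem_divisors.mpr ⟨hdt.trans ⟨p ^ v, by rw [← hnt, mul_comm]⟩, hn0⟩
    · obtain ⟨e, he, rfl⟩ := Finset.mem_image.mp h
      obtain ⟨het, -⟩ := Nat.mem_divisors.mp he
      refine Nat.mem_divisors.mpr ⟨?_, hn0⟩
      rw [← hnt]
      exact mul_dvd_mul (dvd_pow_self p (by omega)) het
  have hdisj : Disjoint t.divisors (t.divisors.image (fun e => p * e)) := by
    rw [Finset.disjoint_left]
    intro d hd hd2
    obtain ⟨e, -, rfl⟩ := Finset.mem_image.mp hd2
    exact hpt ((dvd_mul_right p e).trans (Nat.mem_divisors.mp hd).1)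
  have hzero : ∀ d ∈ n.divisors,
      d ∉ t.divisors ∪ t.divisors.image (fun e => p * e) → f d = 0 := by
    intro d hd hdu
    obtain ⟨hdn, -⟩ := Nat.mem_divisors.mp hd
    have hnsq : ¬ Squarefree d := by
      intro hsq
      apply hdu
      by_cases hpd : p ∣ d
      · obtain ⟨e, rfl⟩ := hpd
        have hpe : ¬ p ∣ e := by
          intro hpe
          exact hpp.one_lt.ne'
            (Nat.isUnit_iff.mp (hsq p (mul_dvd_mul_left p hpe)))
        have hce : Nat.Coprime e (p ^ v) :=
          (Nat.coprime_comm.mp ((hpp.coprime_iff_not_dvd).mpr hpe)).pow_right v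
        have het : e ∣ t := by
          refine hce.dvd_of_dvd_mul_left ?_
          exact ((dvd_mul_left e p).trans hdn).trans (dvd_of_eq (by rw [← hnt]))
        exact Finset.mem_union_right _
          (Finset.mem_image.mpr ⟨e, Nat.mem_divisors.mpr ⟨het, ht0⟩, rfl⟩)
      · have hce : Nat.Coprime d (p ^ v) :=
          (Nat.coprime_comm.mp ((hpp.coprime_iff_not_dvd).mpr hpd)).pow_right v
        have hdt : d ∣ t :=
          hce.dvd_of_dvd_mul_left (hdn.trans (dvd_of_eq (by rw [← hnt])))
        exact Finset.mem_union_left _ (Nat.mem_divisors.mpr ⟨hdt, ht0⟩)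
    simp [hf, ArithmeticFunction.moebius_eq_zero_of_not_squarefree hnsq]
  have hinj : ∀ e1 ∈ t.divisors, ∀ e2 ∈ t.divisors, p * e1 = p * e2 → e1 = e2 := by
    intro e1 _ e2 _ h
    exact Nat.eq_of_mul_eq_mul_left hp0 h
  have hsum : ∑ m ∈ n.divisors, f m = ∑ e ∈ t.divisors, (f e + f (p * e)) := by
    rw [← Finset.sum_subset hsub hzero, Finset.sum_union hdisj, Finset.sum_image hinj,
      Finset.sum_add_distrib]
  rw [hsum]
  apply Finset.dvd_sum
  intro e he
  obtain ⟨het, -⟩ := Nat.mem_divisors.mp he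
  obtain ⟨m, hm⟩ := het
  have he0 : e ≠ 0 := by rintro rfl; rw [hm] at ht0; simp at ht0
  have hpe : ¬ p ∣ e := fun h => hpt (hm ▸ h.mul_right m)
  have hmu : (moebius (p * e) : ℤ) = -(moebius e : ℤ) := by
    rw [ArithmeticFunction.isMultiplicative_moebius.map_mul_of_coprime
      ((hpp.coprime_iff_not_dvd).mpr hpe), ArithmeticFunction.moebius_apply_prime hpp]
    ring
  have h1 : n / e = p ^ v * m := by
    rw [← hnt, hm, Nat.mul_div_assoc _ (dvd_mul_right e m),
      Nat.mul_div_cancel_left m (by omega)]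
  have h2 : n / (p * e) = p ^ w * m := by
    rw [← hnt, hm, hw, show p ^ (w + 1) * (e * m) = p * e * (p ^ w * m) by ring,
      Nat.mul_div_cancel_left _ (by positivity)]
  have key : (p : ℤ) ^ v ∣ csgn r k e ^ (n / e) - csgn r k (p * e) ^ (n / (p * e)) := by
    rw [h1, h2, hw]
    exact aux_dvd p w m _ _ (step_dvd r k p m e hpp)
  have : f e + f (p * e) =
      (moebius e : ℤ) * (csgn r k e ^ (n / e) - csgn r k (p * e) ^ (n / (p * e))) := by
    simp only [hf, hmu]; ring
  rw [this]
  exact key.mul_left _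

lemma super_witt_dvd (r k n : ℕ) (hn0 : n ≠ 0) :
    (n : ℤ) ∣ ∑ m ∈ n.divisors, (moebius m : ℤ) * csgn r k m ^ (n / m) := by
  have hfact : (n : ℤ) = ∏ p ∈ n.primeFactors, (p : ℤ) ^ (n.factorization p) := by
    conv_lhs => rw [← Nat.factorization_prod_pow_eq_self hn0]
    rw [Finsupp.prod, Nat.support_factorization]
    push_cast
    rfl
  rw [hfact]
  apply Finset.prod_dvd_of_coprime
  · intro a ha b hb hab
    apply IsCoprime.pow
    rw [Nat.isCoprime_iff_coprime]
    exact (Nat.coprime_primes (Nat.prime_of_mem_primeFactors ha)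
      (Nat.prime_of_mem_primeFactors hb)).mpr hab
  · intro p hp
    exact prime_pow_dvd_sum r k n hn0 p (Nat.prime_of_mem_primeFactors hp)
      ((Nat.Prime.factorization_pos_of_dvd (Nat.prime_of_mem_primeFactors hp) hn0
        (Nat.dvd_of_mem_primeFactors hp)))

lemma abs_term_le (r k n m : ℕ) (hk : k ≤ r) :
    |(moebius m : ℤ) * csgn r k m ^ (n / m)| ≤ (r : ℤ) ^ (n / m) := by
  rw [abs_mul, abs_pow]
  calc |(moebius m : ℤ)| * |csgn r k m| ^ (n / m)
      ≤ 1 * (r : ℤ) ^ (n / m) := by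
        apply mul_le_mul abs_moebius_le_one
          (pow_le_pow_left₀ (abs_nonneg _) (csgn_abs_le r k m hk) _)
          (pow_nonneg (abs_nonneg _) _) zero_le_one
    _ = (r : ℤ) ^ (n / m) := one_mul _

lemma divisors_card_le (n : ℕ) (hn0 : n ≠ 0) : n.divisors.card ≤ n := by
  have h : n.divisors ⊆ Finset.Icc 1 n := by
    intro d hd
    obtain ⟨hdvd, -⟩ := Nat.mem_divisors.mp hd
    exact Finset.mem_Icc.mpr ⟨Nat.pos_of_mem_divisors hd, Nat.le_of_dvd (by omega) hdvd⟩
  simpa using Finset.card_le_card h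

lemma super_witt_nonneg (r k n : ℕ) (hr : 1 ≤ r) (hk : k ≤ r) (hn : 1 ≤ n) :
    0 ≤ ∑ m ∈ n.divisors, (moebius m : ℤ) * csgn r k m ^ (n / m) := by
  have hn0 : n ≠ 0 := by omega
  have h1mem : (1 : ℕ) ∈ n.divisors := Nat.one_mem_divisors.mpr hn0
  rcases Nat.lt_or_ge r 2 with hr1 | hr2
  · -- r = 1
    have hr' : r = 1 := by omega
    subst hr'
    have hk1 : k ≤ 1 := hk
    rcases Nat.lt_or_ge n 3 with hn3 | hn3
    · interval_cases n
      · simp [Nat.divisors_one, csgn_odd 1 k 1 odd_one]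
      · rw [show (2 : ℕ).divisors = {1, 2} from rfl, Finset.sum_insert (by decide),
          Finset.sum_singleton]
        simp only [ArithmeticFunction.moebius_apply_one,
          ArithmeticFunction.moebius_apply_prime Nat.prime_two,
          csgn_odd 1 k 1 odd_one, csgn_even 1 k 2 (by decide)]
        push_cast
        norm_num
        omega
    · -- n ≥ 3 : the sum has absolute value < n and is divisible by n, hence 0
      have hdvd := super_witt_dvd 1 k n hn0
      have hcard : n.divisors.card ≤ n - 1 := by
        have h : n.divisors ⊆ (Finset.Icc 1 n).erase (n - 1) := by
          intro d hd
          obtain ⟨hdvd', -⟩ := Nat.mem_divisors.mp hd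
          refine Finset.mem_erase.mpr ⟨?_, Finset.mem_Icc.mpr
            ⟨Nat.pos_of_mem_divisors hd, Nat.le_of_dvd (by omega) hdvd'⟩⟩
          intro hdn
          subst hdn
          have h2 := Nat.dvd_sub hdvd' (dvd_refl (n - 1))
          rw [show n - (n - 1) = 1 by omega] at h2
          have := Nat.le_of_dvd one_pos h2
          omega
        have := Finset.card_le_card h
        rwa [Finset.card_erase_of_mem (Finset.mem_Icc.mpr ⟨by omega, by omega⟩),
          Nat.card_Icc] at this
      have habs : |∑ m ∈ n.divisors, (moebius m : ℤ) * csgn 1 k m ^ (n / m)| < (n : ℤ) := by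
        calc |∑ m ∈ n.divisors, (moebius m : ℤ) * csgn 1 k m ^ (n / m)|
            ≤ ∑ m ∈ n.divisors, |(moebius m : ℤ) * csgn 1 k m ^ (n / m)| :=
              Finset.abs_sum_le_sum_abs _ _
          _ ≤ ∑ m ∈ n.divisors, 1 := by
              apply Finset.sum_le_sum
              intro m hm
              exact (abs_term_le 1 k n m hk).trans (by norm_num)
          _ = (n.divisors.card : ℤ) := by simp
          _ < (n : ℤ) := by exact_mod_cast (by omega : n.divisors.card < n)
      rw [Int.eq_zero_of_abs_lt_dvd hdvd habs]
  · -- r ≥ 2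
    set f : ℕ → ℤ := fun m => (moebius m : ℤ) * csgn r k m ^ (n / m) with hf
    have hrest : |∑ m ∈ n.divisors.erase 1, f m| ≤ ((n : ℤ) - 1) * (r : ℤ) ^ (n / 2) := by
      calc |∑ m ∈ n.divisors.erase 1, f m| ≤ ∑ m ∈ n.divisors.erase 1, |f m| :=
            Finset.abs_sum_le_sum_abs _ _
        _ ≤ ∑ m ∈ n.divisors.erase 1, (r : ℤ) ^ (n / 2) := by
            apply Finset.sum_le_sum
            intro m hm
            obtain ⟨hne, hmem⟩ := Finset.mem_erase.mp hm
            obtain ⟨hdvd', -⟩ := Nat.mem_divisors.mp hmem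
            have hm2 : 2 ≤ m := by
              have := Nat.pos_of_mem_divisors hmem
              omega
            refine (abs_term_le r k n m hk).trans ?_
            exact pow_le_pow_right₀ (by exact_mod_cast hr) (Nat.div_le_div_left hm2 two_pos)
        _ = ((n.divisors.erase 1).card : ℤ) * (r : ℤ) ^ (n / 2) := by
            rw [Finset.sum_const, nsmul_eq_mul]
        _ ≤ ((n : ℤ) - 1) * (r : ℤ) ^ (n / 2) := by
            apply mul_le_mul_of_nonneg_right _ (pow_nonneg (by positivity) _)
            have h1 : (n.divisors.erase 1).card ≤ n - 1 := by
              rw [Finset.card_erase_of_mem h1mem]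
              have := divisors_card_le n hn0
              omega
            have h2 : ((n.divisors.erase 1).card : ℤ) ≤ ((n - 1 : ℕ) : ℤ) := by
              exact_mod_cast h1
            refine h2.trans ?_
            push_cast
            omega
    have hgrow : ((n : ℤ) - 1) * (r : ℤ) ^ (n / 2) ≤ (r : ℤ) ^ n := by
      have hsplit : (r : ℤ) ^ n = (r : ℤ) ^ (n - n / 2) * (r : ℤ) ^ (n / 2) := by
        rw [← pow_add]
        congr 1
        omega
      rw [hsplit]
      apply mul_le_mul_of_nonneg_right _ (pow_nonneg (by positivity) _)
      have h2 : (n : ℤ) ≤ (2 : ℤ) ^ (n - n / 2) := by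
        exact_mod_cast nat_le_two_pow_half n
      have h3 : (2 : ℤ) ^ (n - n / 2) ≤ (r : ℤ) ^ (n - n / 2) :=
        pow_le_pow_left₀ (by norm_num) (by exact_mod_cast hr2) _
      linarith
    have hf1 : f 1 = (r : ℤ) ^ n := by
      simp [hf, ArithmeticFunction.moebius_apply_one, csgn_odd r k 1 odd_one]
    have hsplit : ∑ m ∈ n.divisors, f m = f 1 + ∑ m ∈ n.divisors.erase 1, f m :=
      (Finset.add_sum_erase _ f h1mem).symm
    show 0 ≤ ∑ m ∈ n.divisors, f m
    rw [hsplit, hf1]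
    have := neg_abs_le (∑ m ∈ n.divisors.erase 1, f m)
    linarith

/-- For `r ≥ 1`, `0 ≤ k ≤ r` and `n ≥ 1`, `n` divides
`∑_{m ∣ n} μ(m)·(k − (−1)^m(r − k))^{n/m}`, and the quotient
`(1/n)·∑_{m ∣ n} μ(m)·(k − (−1)^m(r − k))^{n/m}` is a nonnegative integer. -/
theorem super_witt_dvd_nonneg (r k n : ℕ) (hr : 1 ≤ r) (hk : k ≤ r) (hn : 1 ≤ n) :
    (n : ℤ) ∣ (∑ m ∈ n.divisors, (ArithmeticFunction.moebius m : ℤ) * csgn r k m ^ (n / m)) ∧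
      0 ≤ (∑ m ∈ n.divisors, (ArithmeticFunction.moebius m : ℤ) * csgn r k m ^ (n / m)) /
        (n : ℤ) := by
  refine ⟨super_witt_dvd r k n (by omega), ?_⟩
  exact Int.ediv_nonneg (super_witt_nonneg r k n hr hk hn) (by positivity)
end
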